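/- arXiv:1105.2133 — 7 statements merged into one kernel-verified Lean document; each statement's English description precedes it below -/
import Mathlib

section
/- Let S = [0,T] (or [0,∞)) and let x : S → ℝ be continuous on S and differentiable on S \ {0}. If there is a constant C such that for all t ∈ S \ {0}, x(t) ≥ C implies x'(t) ≤ 0, then sup_{t ∈ S} x(t) ≤ max{x(0), C}. -/
/-- Lemma 1 (barrier principle): if x is continuous on S (= [0,T] or [0,∞)),
differentiable on S \ {0}, and x(t) ≥ C implies x'(t) ≤ 0 there, then
sup_{t ∈ S} x(t) ≤ max {x(0), C}. -/
theorem barrier_principle (S : Set ℝ) (T : ℝ) (hT : 0 ≤ T)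
    (hS : S = Set.Icc 0 T ∨ S = Set.Ici 0)
    (x x' : ℝ → ℝ) (hcont : ContinuousOn x S)
    (hderiv : ∀ t ∈ S \ {0}, HasDerivAt x (x' t) t)
    (C : ℝ) (hC : ∀ t ∈ S \ {0}, C ≤ x t → x' t ≤ 0) :
    ∀ t ∈ S, x t ≤ max (x 0) C := by
  intro t ht
  set M := max (x 0) C with hM
  by_contra hlt
  push_neg at hlt
  -- t ≥ 0 and Icc 0 t ⊆ S
  have ht0 : 0 ≤ t := by
    rcases hS with h | h <;> rw [h] at ht
    · exact ht.1
    · exact ht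
  have hsub : Set.Icc 0 t ⊆ S := by
    rcases hS with h | h <;> rw [h]
    · exact Set.Icc_subset_Icc le_rfl (by rw [h] at ht; exact ht.2)
    · exact fun u hu => hu.1
  have h0S : (0:ℝ) ∈ S := hsub ⟨le_rfl, ht0⟩
  have hx0 : x 0 ≤ M := le_max_left _ _
  -- the set where x ≤ M
  set K := {u : ℝ | u ∈ Set.Icc 0 t ∧ x u ≤ M} with hK
  have hKne : K.Nonempty := ⟨0, ⟨le_rfl, ht0⟩, hx0⟩
  have hKbdd : BddAbove K := ⟨t, fun u hu => hu.1.2⟩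
  have hKclosed : IsClosed K := by
    have hc : ContinuousOn x (Set.Icc 0 t) := hcont.mono hsub
    have : K = Set.Icc 0 t ∩ x ⁻¹' (Set.Iic M) := by
      ext u; simp only [hK, Set.mem_setOf_eq, Set.mem_inter_iff, Set.mem_preimage,
        Set.mem_Iic]
    rw [this]
    exact (hc.preimage_isClosed_of_isClosed isClosed_Icc isClosed_Iic)
  set s := sSup K with hs
  have hsK : s ∈ K := hKclosed.csSup_mem hKne hKbdd
  have hst : s < t := lt_of_le_of_ne hsK.1.2 (fun h => absurd (h ▸ hsK.2) (not_le.mpr hlt))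
  have hs0 : 0 ≤ s := hsK.1.1
  -- on Ioc s t, x > M
  have hgt : ∀ u ∈ Set.Ioc s t, M < x u := by
    intro u hu
    by_contra h
    push_neg at h
    have : u ∈ K := ⟨⟨hs0.trans hu.1.le, hu.2⟩, h⟩
    exact absurd (le_csSup hKbdd this) (not_le.mpr hu.1)
  have hsubst : Set.Icc s t ⊆ S := fun u hu => hsub ⟨hs0.trans hu.1, hu.2⟩
  have hmemS : ∀ u ∈ Set.Ioo s t, u ∈ S \ {0} := by
    intro u hu
    refine ⟨hsubst ⟨hu.1.le, hu.2.le⟩, ?_⟩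
    simp only [Set.mem_singleton_iff]
    intro h; rw [h] at hu; exact absurd (hs0.trans_lt hu.1) (lt_irrefl 0)
  have hanti : AntitoneOn x (Set.Icc s t) := by
    apply antitoneOn_of_deriv_nonpos (convex_Icc s t) (hcont.mono hsubst)
    · rw [interior_Icc]
      intro u hu
      exact (hderiv u (hmemS u hu)).differentiableAt.differentiableWithinAt
    · rw [interior_Icc]
      intro u hu
      rw [(hderiv u (hmemS u hu)).deriv]
      exact hC u (hmemS u hu) ((le_max_right (x 0) C).trans (hgt u ⟨hu.1, hu.2.le⟩).le)
  have : x t ≤ x s := hanti ⟨le_rfl, hst.le⟩ ⟨hst.le, le_rfl⟩ hst.le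
  exact absurd (this.trans hsK.2) (not_le.mpr hlt)
end

section
/- Let Λ ∈ (0,∞)^K with ‖Λ‖₁ > e^{−1} and p ∈ (0,∞)^K. If z, z̃ : [0,∞) → ℝ₊^K are two continuous functions, both nonzero for all t > 0, with the same nonzero initial state z(0) = z̃(0) ≠ 0, and both satisfy z(t) = z(0) + tΛ − e^{−1}∫₀ᵗ z(s)/‖z(s)‖₁ ds − p ∗ ∫₀ᵗ z(s) ds, then z ≡ z̃. -/
open Set intervalIntegral

/-- Integral form of Gronwall's inequality with zero initial bound: a continuous
nonnegative function dominated by `C` times its own integral vanishes. -/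
lemma gronwall_integral_zero {u : ℝ → ℝ} {C b : ℝ} (hu : Continuous u)
    (hun : ∀ t : ℝ, 0 ≤ t → 0 ≤ u t) (hC : 0 ≤ C)
    (h : ∀ t ∈ Icc (0:ℝ) b, u t ≤ C * ∫ s in (0:ℝ)..t, u s) :
    ∀ t ∈ Icc (0:ℝ) b, u t = 0 := by
  set v : ℝ → ℝ := fun t => ∫ s in (0:ℝ)..t, u s with hv
  have Hv : ∀ t : ℝ, HasDerivAt v (u t) t := fun t =>
    integral_hasDerivAt_right (hu.intervalIntegrable 0 t)
      ⟨Set.univ, Filter.univ_mem, hu.measurable.stronglyMeasurable.aestronglyMeasurable⟩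
      hu.continuousAt
  have hvc : ContinuousOn v (Icc 0 b) := fun t _ => ((Hv t).continuousAt).continuousWithinAt
  have hvnn : ∀ t ∈ Icc (0:ℝ) b, 0 ≤ v t := fun t ht =>
    intervalIntegral.integral_nonneg ht.1 fun s hs => hun s hs.1
  have hgron : ∀ t ∈ Icc (0:ℝ) b, ‖v t‖ ≤ gronwallBound 0 C 0 (t - 0) := by
    refine norm_le_gronwallBound_of_norm_deriv_right_le hvc
      (fun t _ => (Hv t).hasDerivWithinAt) (by simp [hv]) ?_
    intro t ht
    have h1 : u t ≤ C * v t := h t ⟨ht.1, le_of_lt ht.2⟩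
    have h2 : 0 ≤ u t := hun t ht.1
    have h3 : 0 ≤ v t := hvnn t ⟨ht.1, le_of_lt ht.2⟩
    rw [Real.norm_eq_abs, Real.norm_eq_abs, abs_of_nonneg h2, abs_of_nonneg h3]
    linarith
  intro t ht
  have hvt : v t = 0 := by
    have := hgron t ht
    rw [gronwallBound_ε0_δ0] at this
    have := norm_nonneg (v t)
    have : ‖v t‖ = 0 := le_antisymm (hgron t ht |>.trans_eq (gronwallBound_ε0_δ0 _ _)) this
    simpa using this
  have := h t ht
  rw [show (∫ s in (0:ℝ)..t, u s) = v t from rfl, hvt] at this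
  have := hun t ht.1
  linarith [h t ht]

/-- Lipschitz-type bound for `x ↦ x / ‖x‖₁` away from zero, componentwise. -/
lemma ratio_diff_bound {K : ℕ} (x y : Fin K → ℝ) (ε : ℝ) (hε : 0 < ε)
    (hy : ∀ i, 0 ≤ y i)
    (hSx : ε ≤ ∑ j, x j) (hSy : ε ≤ ∑ j, y j) (i : Fin K) :
    |x i / ∑ j, x j - y i / ∑ j, y j| ≤ ((1 + K) / ε) * ‖x - y‖ := by
  set S := ∑ j, x j with hSdef
  set T := ∑ j, y j with hTdef
  have hS0 : 0 < S := lt_of_lt_of_le hε hSx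
  have hT0 : 0 < T := lt_of_lt_of_le hε hSy
  have hid : x i / S - y i / T = (x i - y i) / S + y i * (T - S) / (S * T) := by
    field_simp
    ring
  have hcomp : ∀ j, |x j - y j| ≤ ‖x - y‖ := fun j => by
    simpa using norm_le_pi_norm (x - y) j
  have hTS : |T - S| ≤ (K : ℝ) * ‖x - y‖ := by
    have hts : T - S = ∑ j, (y j - x j) := by rw [hSdef, hTdef, Finset.sum_sub_distrib]
    rw [hts]
    calc |∑ j, (y j - x j)| ≤ ∑ j, |y j - x j| := Finset.abs_sum_le_sum_abs _ _
      _ ≤ ∑ _j : Fin K, ‖x - y‖ := by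
          refine Finset.sum_le_sum fun j _ => ?_
          rw [abs_sub_comm]; exact hcomp j
      _ = (K : ℝ) * ‖x - y‖ := by simp [mul_comm]
  rw [hid]
  have h1 : |(x i - y i) / S| ≤ ‖x - y‖ / ε := by
    rw [abs_div, abs_of_pos hS0]
    exact div_le_div₀ (le_trans (abs_nonneg _) (hcomp i)) (hcomp i) hε hSx
  have h2 : |y i * (T - S) / (S * T)| ≤ (K : ℝ) * ‖x - y‖ / ε := by
    rw [abs_div, abs_mul, abs_of_pos (mul_pos hS0 hT0), abs_of_nonneg (hy i)]
    have hyT : y i ≤ T := by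
      rw [hTdef]
      exact Finset.single_le_sum (fun j _ => hy j) (Finset.mem_univ i)
    calc y i * |T - S| / (S * T) ≤ T * |T - S| / (S * T) := by gcongr
      _ = |T - S| / S := by field_simp
      _ ≤ (K : ℝ) * ‖x - y‖ / ε :=
          div_le_div₀ (le_trans (abs_nonneg _) hTS) hTS hε hSx
  calc |(x i - y i) / S + y i * (T - S) / (S * T)|
      ≤ |(x i - y i) / S| + |y i * (T - S) / (S * T)| := abs_add_le _ _
    _ ≤ ‖x - y‖ / ε + (K : ℝ) * ‖x - y‖ / ε := add_le_add h1 h2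
    _ = ((1 + K) / ε) * ‖x - y‖ := by ring

/-- Uniqueness of the multiclass fluid model solution for a nonzero initial
state: two continuous nonnegative solutions of the fluid model integral
equation with the same nonzero initial state coincide. -/
theorem fluid_model_unique_nonzero_initial (K : ℕ) (Λ p : Fin K → ℝ)
    (hΛ : ∀ i, 0 < Λ i) (hΛ1 : Real.exp (-1) < ∑ i, Λ i) (hp : ∀ i, 0 < p i)
    (z zt : ℝ → Fin K → ℝ)
    (hzc : Continuous z) (hztc : Continuous zt)
    (hznn : ∀ t : ℝ, 0 ≤ t → ∀ i, 0 ≤ z t i)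
    (hztnn : ∀ t : ℝ, 0 ≤ t → ∀ i, 0 ≤ zt t i)
    (hzne : ∀ t : ℝ, 0 < t → z t ≠ 0)
    (hztne : ∀ t : ℝ, 0 < t → zt t ≠ 0)
    (h0 : z 0 = zt 0) (h0ne : z 0 ≠ 0)
    (hz : ∀ t : ℝ, 0 ≤ t → ∀ i,
      z t i = z 0 i + t * Λ i
        - Real.exp (-1) * ∫ s in (0:ℝ)..t, z s i / ∑ j, z s j
        - p i * ∫ s in (0:ℝ)..t, z s i)
    (hzt : ∀ t : ℝ, 0 ≤ t → ∀ i,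
      zt t i = zt 0 i + t * Λ i
        - Real.exp (-1) * ∫ s in (0:ℝ)..t, zt s i / ∑ j, zt s j
        - p i * ∫ s in (0:ℝ)..t, zt s i) :
    ∀ t : ℝ, 0 ≤ t → z t = zt t := by
  intro b hb
  -- positivity of the sums for nonnegative times
  have hSz : ∀ t : ℝ, 0 ≤ t → 0 < ∑ j, z t j := by
    intro t ht
    have hne : z t ≠ 0 := by
      rcases ht.eq_or_lt with h | h
      · rw [← h]; exact h0ne
      · exact hzne t h
    obtain ⟨i, hi⟩ := Function.ne_iff.mp hne
    exact Finset.sum_pos' (fun j _ => hznn t ht j)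
      ⟨i, Finset.mem_univ i, lt_of_le_of_ne (hznn t ht i) (Ne.symm hi)⟩
  have hSzt : ∀ t : ℝ, 0 ≤ t → 0 < ∑ j, zt t j := by
    intro t ht
    have hne : zt t ≠ 0 := by
      rcases ht.eq_or_lt with h | h
      · rw [← h, ← h0]; exact h0ne
      · exact hztne t h
    obtain ⟨i, hi⟩ := Function.ne_iff.mp hne
    exact Finset.sum_pos' (fun j _ => hztnn t ht j)
      ⟨i, Finset.mem_univ i, lt_of_le_of_ne (hztnn t ht i) (Ne.symm hi)⟩
  -- continuity of sums
  have hSzc : Continuous fun t => ∑ j, z t j :=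
    continuous_finset_sum _ fun j _ => (continuous_apply j).comp hzc
  have hSztc : Continuous fun t => ∑ j, zt t j :=
    continuous_finset_sum _ fun j _ => (continuous_apply j).comp hztc
  -- a uniform lower bound ε for the sums on [0, b]
  obtain ⟨t₁, ht₁, hmin₁⟩ := (isCompact_Icc (a := (0:ℝ)) (b := b)).exists_isMinOn
    ⟨0, left_mem_Icc.mpr hb⟩ hSzc.continuousOn
  obtain ⟨t₂, ht₂, hmin₂⟩ := (isCompact_Icc (a := (0:ℝ)) (b := b)).exists_isMinOn
    ⟨0, left_mem_Icc.mpr hb⟩ hSztc.continuousOn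
  set ε : ℝ := min (∑ j, z t₁ j) (∑ j, zt t₂ j) with hεdef
  have hε : 0 < ε := lt_min (hSz t₁ ht₁.1) (hSzt t₂ ht₂.1)
  have hεz : ∀ t ∈ Icc (0:ℝ) b, ε ≤ ∑ j, z t j := fun t ht =>
    le_trans (min_le_left _ _) (hmin₁ ht)
  have hεzt : ∀ t ∈ Icc (0:ℝ) b, ε ≤ ∑ j, zt t j := fun t ht =>
    le_trans (min_le_right _ _) (hmin₂ ht)
  -- constants
  set L : ℝ := (1 + K) / ε with hLdef
  have hL0 : 0 ≤ L := by positivity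
  set P : ℝ := ∑ j, p j with hPdef
  have hPi : ∀ i, p i ≤ P := fun i =>
    Finset.single_le_sum (fun j _ => (hp j).le) (Finset.mem_univ i)
  have hP0 : 0 ≤ P := Finset.sum_nonneg fun j _ => (hp j).le
  set C : ℝ := L + P * b with hCdef
  have hC0 : 0 ≤ C := by positivity
  -- the difference norm
  set u : ℝ → ℝ := fun s => ‖z s - zt s‖ with hudef
  have huc : Continuous u := (hzc.sub hztc).norm
  have hecond : Real.exp (-1) ≤ 1 := by
    rw [show (1:ℝ) = Real.exp 0 by simp]
    exact Real.exp_le_exp.mpr (by norm_num)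
  -- the key integral inequality
  have key : ∀ t ∈ Icc (0:ℝ) b, u t ≤ C * ∫ s in (0:ℝ)..t, u s := by
    intro t ⟨ht0, htb⟩
    have hJnn : 0 ≤ ∫ s in (0:ℝ)..t, u s :=
      intervalIntegral.integral_nonneg ht0 fun s _ => norm_nonneg _
    refine (pi_norm_le_iff_of_nonneg (mul_nonneg hC0 hJnn)).mpr fun i => ?_
    -- integrability facts
    have hmem : ∀ s ∈ Icc (0:ℝ) t, s ∈ Icc (0:ℝ) b := fun s hs =>
      ⟨hs.1, hs.2.trans htb⟩
    have hqzint : IntervalIntegrable (fun s => z s i / ∑ j, z s j)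
        MeasureTheory.volume 0 t := by
      apply ContinuousOn.intervalIntegrable
      rw [uIcc_of_le ht0]
      exact (((continuous_apply i).comp hzc).continuousOn).div hSzc.continuousOn
        fun s hs => ne_of_gt (hSz s hs.1)
    have hqztint : IntervalIntegrable (fun s => zt s i / ∑ j, zt s j)
        MeasureTheory.volume 0 t := by
      apply ContinuousOn.intervalIntegrable
      rw [uIcc_of_le ht0]
      exact (((continuous_apply i).comp hztc).continuousOn).div hSztc.continuousOn
        fun s hs => ne_of_gt (hSzt s hs.1)
    have hzint : IntervalIntegrable (fun s => z s i) MeasureTheory.volume 0 t :=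
      ((continuous_apply i).comp hzc).intervalIntegrable 0 t
    have hztint : IntervalIntegrable (fun s => zt s i) MeasureTheory.volume 0 t :=
      ((continuous_apply i).comp hztc).intervalIntegrable 0 t
    have huint : IntervalIntegrable u MeasureTheory.volume 0 t :=
      huc.intervalIntegrable 0 t
    -- rewrite the two fixed-point equations
    have h1 := hz t ht0 i
    have h2 := hzt t ht0 i
    rw [intervalIntegral.integral_sub hqzint intervalIntegrable_const,
      intervalIntegral.integral_const, smul_eq_mul, sub_zero] at h1
    rw [intervalIntegral.integral_sub hqztint intervalIntegrable_const,
      intervalIntegral.integral_const, smul_eq_mul, sub_zero] at h2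
    have h0i : z 0 i = zt 0 i := congrFun h0 i
    -- the difference equation
    have heqd : z t i - zt t i
        = -(Real.exp (-1)) * (((∫ s in (0:ℝ)..t, z s i / ∑ j, z s j)
            - ∫ s in (0:ℝ)..t, zt s i / ∑ j, zt s j)
          - t * (p i * ((∫ s in (0:ℝ)..t, z s i) - ∫ s in (0:ℝ)..t, zt s i))) := by
      rw [h1, h2, h0i]; ring
    -- bounds on the two integral differences
    have hqd : |(∫ s in (0:ℝ)..t, z s i / ∑ j, z s j)
        - ∫ s in (0:ℝ)..t, zt s i / ∑ j, zt s j|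
        ≤ L * ∫ s in (0:ℝ)..t, u s := by
      rw [← intervalIntegral.integral_sub hqzint hqztint]
      calc |∫ s in (0:ℝ)..t, (z s i / ∑ j, z s j - zt s i / ∑ j, zt s j)|
          ≤ ∫ s in (0:ℝ)..t, |z s i / ∑ j, z s j - zt s i / ∑ j, zt s j| :=
            intervalIntegral.abs_integral_le_integral_abs ht0
        _ ≤ ∫ s in (0:ℝ)..t, L * u s := by
            apply intervalIntegral.integral_mono_on ht0 ((hqzint.sub hqztint).abs)
              (huint.const_mul L)
            intro s hs
            have := ratio_diff_bound (z s) (zt s) ε hε (hztnn s hs.1)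
              (hεz s (hmem s hs)) (hεzt s (hmem s hs)) i
            simpa [hLdef, hudef] using this
        _ = L * ∫ s in (0:ℝ)..t, u s := intervalIntegral.integral_const_mul _ _
    have hzd : |(∫ s in (0:ℝ)..t, z s i) - ∫ s in (0:ℝ)..t, zt s i|
        ≤ ∫ s in (0:ℝ)..t, u s := by
      rw [← intervalIntegral.integral_sub hzint hztint]
      calc |∫ s in (0:ℝ)..t, (z s i - zt s i)|
          ≤ ∫ s in (0:ℝ)..t, |z s i - zt s i| :=
            intervalIntegral.abs_integral_le_integral_abs ht0
        _ ≤ ∫ s in (0:ℝ)..t, u s := by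
            apply intervalIntegral.integral_mono_on ht0 ((hzint.sub hztint).abs) huint
            intro s _
            simpa [hudef] using norm_le_pi_norm (z s - zt s) i
    -- assemble
    have habs : |(((∫ s in (0:ℝ)..t, z s i / ∑ j, z s j)
            - ∫ s in (0:ℝ)..t, zt s i / ∑ j, zt s j)
          - t * (p i * ((∫ s in (0:ℝ)..t, z s i) - ∫ s in (0:ℝ)..t, zt s i)))|
        ≤ |(∫ s in (0:ℝ)..t, z s i / ∑ j, z s j)
            - ∫ s in (0:ℝ)..t, zt s i / ∑ j, zt s j|
          + t * (p i * |(∫ s in (0:ℝ)..t, z s i) - ∫ s in (0:ℝ)..t, zt s i|) := by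
      refine (abs_sub _ _).trans ?_
      rw [abs_mul, abs_mul, abs_of_nonneg ht0, abs_of_nonneg (hp i).le]
    have hnorm : ‖(z t - zt t) i‖ = |z t i - zt t i| := by
      simp [Real.norm_eq_abs]
    rw [hnorm, heqd, abs_mul, abs_neg, abs_of_pos (Real.exp_pos _)]
    have hbr : |(((∫ s in (0:ℝ)..t, z s i / ∑ j, z s j)
            - ∫ s in (0:ℝ)..t, zt s i / ∑ j, zt s j)
          - t * (p i * ((∫ s in (0:ℝ)..t, z s i) - ∫ s in (0:ℝ)..t, zt s i)))|
        ≤ C * ∫ s in (0:ℝ)..t, u s := by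
      refine habs.trans ?_
      have h3 : t * (p i * |(∫ s in (0:ℝ)..t, z s i) - ∫ s in (0:ℝ)..t, zt s i|)
          ≤ b * (P * ∫ s in (0:ℝ)..t, u s) := by
        have hpi := hPi i
        have habsnn : (0:ℝ) ≤ |(∫ s in (0:ℝ)..t, z s i) - ∫ s in (0:ℝ)..t, zt s i| :=
          abs_nonneg _
        calc t * (p i * |(∫ s in (0:ℝ)..t, z s i) - ∫ s in (0:ℝ)..t, zt s i|)
            ≤ t * (P * ∫ s in (0:ℝ)..t, u s) :=
              mul_le_mul_of_nonneg_left (mul_le_mul hpi hzd habsnn hP0) ht0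
          _ ≤ b * (P * ∫ s in (0:ℝ)..t, u s) :=
              mul_le_mul_of_nonneg_right htb (mul_nonneg hP0 hJnn)
      calc _ ≤ L * (∫ s in (0:ℝ)..t, u s) + b * (P * ∫ s in (0:ℝ)..t, u s) :=
            add_le_add hqd h3
        _ = C * ∫ s in (0:ℝ)..t, u s := by rw [hCdef]; ring
    calc Real.exp (-1) * |(((∫ s in (0:ℝ)..t, z s i / ∑ j, z s j)
            - ∫ s in (0:ℝ)..t, zt s i / ∑ j, zt s j)
          - t * (p i * ((∫ s in (0:ℝ)..t, z s i) - ∫ s in (0:ℝ)..t, zt s i)))|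
        ≤ 1 * (C * ∫ s in (0:ℝ)..t, u s) :=
          mul_le_mul hecond hbr (abs_nonneg _) (by norm_num)
      _ = C * ∫ s in (0:ℝ)..t, u s := one_mul _
  -- conclude via the integral Gronwall lemma
  have hzero := gronwall_integral_zero huc (fun t _ => norm_nonneg _) hC0 key
    b (right_mem_Icc.mpr hb)
  rw [hudef] at hzero
  exact sub_eq_zero.mp (norm_eq_zero.mp hzero)
end

section
/- Let z : [0,∞) → ℝ₊^K be a fluid model solution (continuous, nonzero for t > 0, satisfying z'(t) = Λ − p∗z(t) − e^{−1} z(t)/‖z(t)‖₁ for t > 0). Then for all t ≥ 0, ‖Λ‖₁ − e^{−1} − p^* ‖z(t)‖₁ ≤ ‖z(t)‖₁' ≤ ‖Λ‖₁ − e^{−1} − p_* ‖z(t)‖₁, where p_* = minᵢ pᵢ and p^* = maxᵢ pᵢ; consequently sup_{t≥0} ‖z(t)‖₁ ≤ max{‖z(0)‖₁, (‖Λ‖₁ − e^{−1})/p_*} and inf_{t≥0} ‖z(t)‖₁ ≥ min{‖z(0)‖₁, (‖Λ‖₁ − e^{−1})/p^*}. -/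
open Set Filter Topology

/-- Comparison lemma: if `f' ≤ -m f` on `(0,∞)` with `m > 0`, then
`f t ≤ max (f 0) 0` for all `t ≥ 0`. -/
lemma fluid_aux (f f' : ℝ → ℝ) (hc : Continuous f)
    (hd : ∀ s : ℝ, 0 < s → HasDerivAt f (f' s) s)
    (m : ℝ) (hm : 0 < m) (hb : ∀ s : ℝ, 0 < s → f' s ≤ -(m * f s)) :
    ∀ t : ℝ, 0 ≤ t → f t ≤ max (f 0) 0 := by
  intro t ht
  rcases eq_or_lt_of_le ht with rfl | ht
  · exact le_max_left _ _
  -- Step 1: for every `a ∈ (0, t]`, `f t ≤ max (f a) 0`.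
  have key : ∀ a : ℝ, 0 < a → a ≤ t → f t ≤ max (f a) 0 := by
    intro a ha hat
    have heps : ∀ ε : ℝ, 0 < ε → f t ≤ max (f a) 0 + ε * (t - a + 1) := by
      intro ε hε
      have := image_le_of_deriv_right_lt_deriv_boundary
        (f := f) (f' := f') (a := a) (b := t)
        (hc.continuousOn)
        (fun x hx => (hd x (lt_of_lt_of_le ha hx.1)).hasDerivWithinAt)
        (B := fun x => max (f a) 0 + ε * (x - a + 1)) (B' := fun _ => ε)
        (by
          show f a ≤ max (f a) 0 + ε * (a - a + 1)
          nlinarith [le_max_left (f a) (0:ℝ)])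
        (fun x => by
          have h1 : HasDerivAt (fun x : ℝ => x - a + 1) 1 x :=
            ((hasDerivAt_id x).sub_const a).add_const 1
          have h2 := (h1.const_mul ε).const_add (max (f a) 0)
          simpa using h2)
        (fun x hx hfx => by
          show f' x < ε
          have hx0 : 0 < x := lt_of_lt_of_le ha hx.1
          have hxa : a ≤ x := hx.1
          have h1 : 0 < ε * (x - a + 1) := by nlinarith
          have h2 : 0 < f x := by
            rw [hfx]
            have := le_max_right (f a) (0:ℝ)
            linarith
          have := hb x hx0
          nlinarith)
      exact this (right_mem_Icc.2 hat)
    by_contra hlt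
    push_neg at hlt
    have hpos : (0:ℝ) < t - a + 1 := by linarith
    have := heps ((f t - max (f a) 0) / (2 * (t - a + 1)))
      (div_pos (by linarith) (by linarith))
    have h3 : (f t - max (f a) 0) / (2 * (t - a + 1)) * (t - a + 1)
        = (f t - max (f a) 0) / 2 := by field_simp
    rw [h3] at this
    linarith
  -- Step 2: take the limit `a → 0⁺`.
  have h1 : Tendsto (fun a => max (f a) 0) (𝓝[>] (0:ℝ)) (𝓝 (max (f 0) 0)) :=
    ((hc.max continuous_const).tendsto 0).mono_left nhdsWithin_le_nhds
  refine ge_of_tendsto h1 ?_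
  filter_upwards [Ioc_mem_nhdsGT_of_mem ⟨le_refl (0:ℝ), ht⟩] with a ha
  exact key a ha.1 ha.2

/-- Bounds for the total mass of a fluid model solution: the derivative of
‖z(t)‖₁ is sandwiched between ‖Λ‖₁ − e⁻¹ − p* ‖z(t)‖₁ and
‖Λ‖₁ − e⁻¹ − p_* ‖z(t)‖₁, and consequently ‖z(t)‖₁ is bounded above by
max{‖z(0)‖₁, (‖Λ‖₁ − e⁻¹)/p_*} and below by min{‖z(0)‖₁, (‖Λ‖₁ − e⁻¹)/p*}. -/
theorem fluid_model_norm_bounds (K : ℕ) (Λ p : Fin (K + 1) → ℝ)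
    (hΛ : ∀ i, 0 < Λ i) (hΛ1 : Real.exp (-1) < ∑ i, Λ i) (hp : ∀ i, 0 < p i)
    (z z' : ℝ → Fin (K + 1) → ℝ)
    (hzc : Continuous z)
    (hznn : ∀ t : ℝ, 0 ≤ t → ∀ i, 0 ≤ z t i)
    (hzne : ∀ t : ℝ, 0 < t → z t ≠ 0)
    (hderiv : ∀ t : ℝ, 0 < t → ∀ i, HasDerivAt (fun s => z s i) (z' t i) t)
    (hode : ∀ t : ℝ, 0 < t → ∀ i,
      z' t i = Λ i - p i * z t i - Real.exp (-1) * z t i / ∑ j, z t j) :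
    (∀ t : ℝ, 0 < t →
      (∑ i, Λ i) - Real.exp (-1)
          - (Finset.univ.sup' Finset.univ_nonempty p) * ∑ i, z t i
        ≤ ∑ i, z' t i ∧
      ∑ i, z' t i
        ≤ (∑ i, Λ i) - Real.exp (-1)
          - (Finset.univ.inf' Finset.univ_nonempty p) * ∑ i, z t i) ∧
    (∀ t : ℝ, 0 ≤ t →
      ∑ i, z t i ≤ max (∑ i, z 0 i)
        (((∑ i, Λ i) - Real.exp (-1)) / Finset.univ.inf' Finset.univ_nonempty p)) ∧
    (∀ t : ℝ, 0 ≤ t →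
      min (∑ i, z 0 i)
        (((∑ i, Λ i) - Real.exp (-1)) / Finset.univ.sup' Finset.univ_nonempty p)
        ≤ ∑ i, z t i) := by
  set pinf := Finset.univ.inf' Finset.univ_nonempty p with hpinf
  set psup := Finset.univ.sup' Finset.univ_nonempty p with hpsup
  have hpinf_pos : 0 < pinf := by
    obtain ⟨i, _, hi⟩ := Finset.exists_mem_eq_inf' Finset.univ_nonempty p
    rw [hpinf, hi]; exact hp i
  have hpsup_pos : 0 < psup := by
    obtain ⟨i, _, hi⟩ := Finset.exists_mem_eq_sup' Finset.univ_nonempty p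
    rw [hpsup, hi]; exact hp i
  have hpinf_le : ∀ i, pinf ≤ p i := fun i => Finset.inf'_le p (Finset.mem_univ i)
  have hle_psup : ∀ i, p i ≤ psup := fun i => Finset.le_sup' p (Finset.mem_univ i)
  -- positivity of the total mass for t > 0
  have hTpos : ∀ t : ℝ, 0 < t → 0 < ∑ i, z t i := by
    intro t ht
    have hne := hzne t ht
    have : ∃ i, 0 < z t i := by
      by_contra h
      push_neg at h
      exact hne (funext fun i => le_antisymm (h i) (hznn t ht.le i))
    obtain ⟨i, hi⟩ := this
    exact Finset.sum_pos' (fun j _ => hznn t ht.le j) ⟨i, Finset.mem_univ i, hi⟩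
  -- the key derivative identity
  have hsum : ∀ t : ℝ, 0 < t →
      ∑ i, z' t i = (∑ i, Λ i) - Real.exp (-1) - ∑ i, p i * z t i := by
    intro t ht
    have hT := hTpos t ht
    have : ∑ i, z' t i
        = ∑ i, (Λ i - p i * z t i - Real.exp (-1) * z t i / ∑ j, z t j) :=
      Finset.sum_congr rfl fun i _ => hode t ht i
    rw [this, Finset.sum_sub_distrib, Finset.sum_sub_distrib]
    have h2 : ∑ i, Real.exp (-1) * z t i / ∑ j, z t j = Real.exp (-1) := by
      rw [← Finset.sum_div, ← Finset.mul_sum, mul_div_assoc,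
        div_self hT.ne', mul_one]
    rw [h2]
    ring
  have hsandwich : ∀ t : ℝ, 0 < t →
      (∑ i, Λ i) - Real.exp (-1) - psup * ∑ i, z t i ≤ ∑ i, z' t i ∧
      ∑ i, z' t i ≤ (∑ i, Λ i) - Real.exp (-1) - pinf * ∑ i, z t i := by
    intro t ht
    have hlb : pinf * ∑ i, z t i ≤ ∑ i, p i * z t i := by
      rw [Finset.mul_sum]
      exact Finset.sum_le_sum fun i _ =>
        mul_le_mul_of_nonneg_right (hpinf_le i) (hznn t ht.le i)
    have hub : ∑ i, p i * z t i ≤ psup * ∑ i, z t i := by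
      rw [Finset.mul_sum]
      exact Finset.sum_le_sum fun i _ =>
        mul_le_mul_of_nonneg_right (hle_psup i) (hznn t ht.le i)
    rw [hsum t ht]
    constructor <;> linarith
  refine ⟨hsandwich, ?_, ?_⟩
  · -- upper bound
    set C := (∑ i, Λ i) - Real.exp (-1) with hC
    have := fluid_aux (fun s => (∑ i, z s i) - C / pinf) (fun s => ∑ i, z' s i)
      (by
        have : Continuous fun s => ∑ i, z s i :=
          continuous_finset_sum _ fun i _ => (continuous_apply i).comp hzc
        exact this.sub continuous_const)
      (by
        intro s hs
        exact (HasDerivAt.fun_sum fun i _ => hderiv s hs i).sub_const _)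
      pinf hpinf_pos
      (by
        intro s hs
        have h := (hsandwich s hs).2
        have : pinf * (C / pinf) = C := by field_simp
        nlinarith)
    intro t ht
    have h2 := this t ht
    rcases le_max_iff.1 h2 with h | h
    · have := le_max_left (∑ i, z 0 i) (C / pinf)
      linarith
    · have := le_max_right (∑ i, z 0 i) (C / pinf)
      linarith
  · -- lower bound
    set C := (∑ i, Λ i) - Real.exp (-1) with hC
    have := fluid_aux (fun s => C / psup - ∑ i, z s i) (fun s => -∑ i, z' s i)
      (by
        have : Continuous fun s => ∑ i, z s i :=
          continuous_finset_sum _ fun i _ => (continuous_apply i).comp hzc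
        exact continuous_const.sub this)
      (by
        intro s hs
        exact (HasDerivAt.fun_sum fun i _ => hderiv s hs i).const_sub _)
      psup hpsup_pos
      (by
        intro s hs
        have h := (hsandwich s hs).1
        have : psup * (C / psup) = C := by field_simp
        nlinarith)
    intro t ht
    have h2 := this t ht
    rcases le_max_iff.1 h2 with h | h
    · have := min_le_left (∑ i, z 0 i) (C / psup)
      linarith
    · have := min_le_right (∑ i, z 0 i) (C / psup)
      linarith
end

section
/- Let Λᵢ > 0, pᵢ > 0 (i = 1,…,K) with ‖Λ‖₁ > e^{−1}, and let x > 0 satisfy Σᵢ pᵢΛᵢ/(x + pᵢ) = ‖Λ‖₁ − e^{−1}. Then the vector z^e with zᵢ^e = Λᵢ/(x + pᵢ) satisfies the equilibrium equation Λᵢ − pᵢ zᵢ^e − e^{−1} zᵢ^e/‖z^e‖₁ = 0 for every i, and moreover x = e^{−1}/‖z^e‖₁. -/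
/-- The vector zᵢ = Λᵢ/(x + pᵢ) satisfies the equilibrium equation of the
fluid model, and x = e⁻¹/‖zᵉ‖₁. -/
theorem equilibrium_point_formula (K : ℕ) (Λ p : Fin K → ℝ)
    (hΛ : ∀ i, 0 < Λ i) (hp : ∀ i, 0 < p i)
    (hΛ1 : Real.exp (-1) < ∑ i, Λ i)
    (x : ℝ) (hx : 0 < x)
    (hxeq : ∑ i, p i * Λ i / (x + p i) = (∑ i, Λ i) - Real.exp (-1)) :
    (∀ i, Λ i - p i * (Λ i / (x + p i))
        - Real.exp (-1) * (Λ i / (x + p i)) / (∑ j, Λ j / (x + p j)) = 0) ∧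
    x = Real.exp (-1) / ∑ j, Λ j / (x + p j) := by
  have hxp : ∀ i, (0:ℝ) < x + p i := fun i => by linarith [hp i]
  have hK : K ≠ 0 := by
    rintro rfl
    simp at hΛ1
    exact absurd hΛ1 (not_lt.mpr (Real.exp_pos _).le)
  have hS : 0 < ∑ j, Λ j / (x + p j) := by
    apply Finset.sum_pos (fun j _ => div_pos (hΛ j) (hxp j))
    exact Finset.univ_nonempty_iff.mpr (Fin.pos_iff_nonempty.mp (Nat.pos_of_ne_zero hK))
  have key : x * ∑ j, Λ j / (x + p j) = Real.exp (-1) := by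
    have h : ∀ j : Fin K, x * (Λ j / (x + p j)) = Λ j - p j * Λ j / (x + p j) := by
      intro j
      field_simp [(hxp j).ne']
      ring
    rw [Finset.mul_sum]
    simp_rw [h]
    rw [Finset.sum_sub_distrib, hxeq]
    ring
  have hxS : x = Real.exp (-1) / ∑ j, Λ j / (x + p j) :=
    eq_div_of_mul_eq hS.ne' key
  refine ⟨fun i => ?_, hxS⟩
  rw [← key]
  have h2 : x * (∑ j, Λ j / (x + p j)) * (Λ i / (x + p i)) / (∑ j, Λ j / (x + p j))
      = x * (Λ i / (x + p i)) := by
    rw [mul_comm x, mul_assoc]; exact mul_div_cancel_left₀ _ hS.ne'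
  rw [h2]
  field_simp [(hxp i).ne']
  ring
end

section
/- Let Λᵢ > 0, pᵢ > 0 (i = 1,…,K) with ‖Λ‖₁ > e^{−1}. If z ∈ (0,∞)^K satisfies Λᵢ − pᵢ zᵢ − e^{−1} zᵢ/‖z‖₁ = 0 for every i, then zᵢ = Λᵢ/(x + pᵢ) where x = e^{−1}/‖z‖₁, and x satisfies Σᵢ pᵢΛᵢ/(x + pᵢ) = ‖Λ‖₁ − e^{−1}. In particular, the equilibrium point of the fluid model equation is unique. -/
/-- Converse: any positive solution z of the equilibrium equation is of the
form zᵢ = Λᵢ/(x + pᵢ) with x = e⁻¹/‖z‖₁ satisfying the scalar equation;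
hence the equilibrium point of the fluid model is unique. -/
theorem equilibrium_point_unique (K : ℕ) (Λ p : Fin K → ℝ)
    (hΛ : ∀ i, 0 < Λ i) (hp : ∀ i, 0 < p i)
    (hΛ1 : Real.exp (-1) < ∑ i, Λ i)
    (z : Fin K → ℝ) (hz : ∀ i, 0 < z i)
    (heq : ∀ i, Λ i - p i * z i - Real.exp (-1) * z i / (∑ j, z j) = 0) :
    (∀ i, z i = Λ i / (Real.exp (-1) / (∑ j, z j) + p i)) ∧
    ∑ i, p i * Λ i / (Real.exp (-1) / (∑ j, z j) + p i)
      = (∑ i, Λ i) - Real.exp (-1) := by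
  rcases Nat.eq_zero_or_pos K with hK | hK
  · subst hK
    simp at hΛ1
    exact absurd hΛ1 (not_lt.2 (Real.exp_pos _).le)
  have hS : 0 < ∑ j, z j := by
    apply Finset.sum_pos (fun i _ => hz i)
    haveI : NeZero K := ⟨hK.ne'⟩
    exact Finset.univ_nonempty
  set x := Real.exp (-1) / (∑ j, z j) with hx
  have hxpos : 0 < x := div_pos (Real.exp_pos _) hS
  have key : ∀ i, Λ i = (x + p i) * z i := by
    intro i
    have := heq i
    field_simp [hx, hS.ne'] at this ⊢
    rw [hx]
    field_simp [hS.ne']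
    linarith
  have hzeq : ∀ i, z i = Λ i / (x + p i) := by
    intro i
    have h : (0:ℝ) < x + p i := add_pos hxpos (hp i)
    rw [eq_div_iff h.ne', mul_comm]
    exact (key i).symm
  refine ⟨hzeq, ?_⟩
  have h2 : ∀ i, p i * Λ i / (x + p i) = Λ i - x * z i := by
    intro i
    have h : (0:ℝ) < x + p i := add_pos hxpos (hp i)
    rw [key i]
    field_simp
    ring
  calc ∑ i, p i * Λ i / (x + p i) = ∑ i, (Λ i - x * z i) := by
        exact Finset.sum_congr rfl fun i _ => h2 i
    _ = (∑ i, Λ i) - x * ∑ i, z i := by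
        rw [Finset.sum_sub_distrib, Finset.mul_sum]
    _ = (∑ i, Λ i) - Real.exp (-1) := by
        rw [hx, div_mul_cancel₀ _ hS.ne']
end

section
/- Let a₁ = … = a_K = a ≥ 0, Λ ∈ (0,∞)^K with ‖Λ‖₁ > e^{−1}. The unique function z : [0,∞) → ℝ₊^K, continuous and nonzero for t > 0, satisfying z(0) = 0 and z'(t) = Λ − a z(t) − e^{−1} z(t)/‖z(t)‖₁ for t > 0, is given by zᵢ(t) = (Λᵢ/‖Λ‖₁)(‖Λ‖₁ − e^{−1}) t if a = 0, and zᵢ(t) = (Λᵢ/‖Λ‖₁)((‖Λ‖₁ − e^{−1})/a)(1 − e^{−at}) if a > 0. -/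
lemma const_on_Ici (h : ℝ → ℝ) (hc : ContinuousOn h (Set.Ici 0))
    (hd : ∀ t : ℝ, 0 < t → HasDerivAt h 0 t) : ∀ t : ℝ, 0 ≤ t → h t = h 0 := by
  have hD : DifferentiableOn ℝ h (interior (Set.Ici (0:ℝ))) := by
    rw [interior_Ici]; exact fun x hx => ((hd x hx).differentiableAt).differentiableWithinAt
  have hmono := monotoneOn_of_deriv_nonneg (convex_Ici 0) hc hD (by
    rw [interior_Ici]; intro x hx; simp [(hd x hx).deriv])
  have hanti := antitoneOn_of_deriv_nonpos (convex_Ici 0) hc hD (by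
    rw [interior_Ici]; intro x hx; simp [(hd x hx).deriv])
  intro t ht
  exact le_antisymm (hanti (Set.self_mem_Ici) ht ht) (hmono (Set.self_mem_Ici) ht ht)

/-- Property 1(iii): when all impatience parameters equal a ≥ 0, the unique
fluid-model-type solution starting from 0 is
zᵢ(t) = (Λᵢ/‖Λ‖₁)(‖Λ‖₁ − e⁻¹)t (a = 0) or
zᵢ(t) = (Λᵢ/‖Λ‖₁)((‖Λ‖₁ − e⁻¹)/a)(1 − e^{−at}) (a > 0). -/
theorem zero_initial_equal_rates_solution (K : ℕ) (Λ : Fin K → ℝ) (a : ℝ)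
    (hΛ : ∀ i, 0 < Λ i) (hΛ1 : Real.exp (-1) < ∑ i, Λ i) (ha : 0 ≤ a) :
    (∀ z : ℝ → Fin K → ℝ,
      ContinuousOn z (Set.Ici 0) →
      (∀ t : ℝ, 0 ≤ t → ∀ i, 0 ≤ z t i) →
      (∀ t : ℝ, 0 < t → z t ≠ 0) →
      z 0 = 0 →
      (∀ t : ℝ, 0 < t → ∀ i, HasDerivAt (fun s => z s i)
        (Λ i - a * z t i - Real.exp (-1) * z t i / ∑ j, z t j) t) →
      ∀ t : ℝ, 0 ≤ t → ∀ i,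
        z t i = if a = 0 then
            Λ i / (∑ j, Λ j) * ((∑ j, Λ j) - Real.exp (-1)) * t
          else
            Λ i / (∑ j, Λ j) * (((∑ j, Λ j) - Real.exp (-1)) / a)
              * (1 - Real.exp (-(a * t)))) ∧
    (∃ z : ℝ → Fin K → ℝ,
      ContinuousOn z (Set.Ici 0) ∧
      (∀ t : ℝ, 0 ≤ t → ∀ i, 0 ≤ z t i) ∧
      (∀ t : ℝ, 0 < t → z t ≠ 0) ∧
      z 0 = 0 ∧
      (∀ t : ℝ, 0 < t → ∀ i, HasDerivAt (fun s => z s i)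
        (Λ i - a * z t i - Real.exp (-1) * z t i / ∑ j, z t j) t) ∧
      (∀ t : ℝ, 0 ≤ t → ∀ i,
        z t i = if a = 0 then
            Λ i / (∑ j, Λ j) * ((∑ j, Λ j) - Real.exp (-1)) * t
          else
            Λ i / (∑ j, Λ j) * (((∑ j, Λ j) - Real.exp (-1)) / a)
              * (1 - Real.exp (-(a * t))))) := by
  set E : ℝ := Real.exp (-1) with hEdef
  set S : ℝ := ∑ i, Λ i with hSdef
  have hE : 0 < E := Real.exp_pos _
  have hSE : 0 < S - E := by linarith
  have hS : 0 < S := by linarith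
  have hK : Nonempty (Fin K) := by
    by_contra h
    have : S = 0 := by
      rw [hSdef]
      exact Finset.sum_eq_zero (fun i _ => absurd ⟨i⟩ h)
    linarith
  set F : ℝ → ℝ := fun t =>
    if a = 0 then (S - E) * t else ((S - E) / a) * (1 - Real.exp (-(a * t))) with hFdef
  have hF0 : F 0 = 0 := by
    rw [hFdef]; split_ifs <;> simp
  have hFpos : ∀ t : ℝ, 0 < t → 0 < F t := by
    intro t ht
    rw [hFdef]
    split_ifs with h0
    · exact mul_pos hSE ht
    · have ha' : 0 < a := lt_of_le_of_ne ha (Ne.symm h0)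
      have : Real.exp (-(a * t)) < 1 := by
        rw [Real.exp_lt_one_iff]
        nlinarith
      have h1 : 0 < 1 - Real.exp (-(a * t)) := by linarith
      exact mul_pos (div_pos hSE ha') h1
  have hFnonneg : ∀ t : ℝ, 0 ≤ t → 0 ≤ F t := by
    intro t ht
    rcases ht.eq_or_lt with h | h
    · rw [← h, hF0]
    · exact (hFpos t h).le
  have hFc : Continuous F := by
    rw [hFdef]
    split_ifs with h0
    · exact continuous_const.mul continuous_id
    · exact continuous_const.mul
        (continuous_const.sub (Real.continuous_exp.comp (continuous_const.mul continuous_id).neg))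
  have hF' : ∀ t : ℝ, HasDerivAt F (S - E - a * F t) t := by
    intro t
    rw [hFdef]
    split_ifs with h0
    · have := (hasDerivAt_id t).const_mul (S - E)
      simp only [mul_one] at this
      simpa [h0] using this
    · have hin : HasDerivAt (fun s : ℝ => -(a * s)) (-a) t := by
        have := ((hasDerivAt_id t).const_mul a).neg
        simp only [mul_one] at this
        exact this
      have hexp := hin.exp
      have h2 := (hexp.const_sub 1).const_mul ((S - E) / a)
      convert h2 using 1
      · rfl
      · rfl
      beta_reduce
      field_simp
      ring
  -- formula = (Λ i / S) * F t
  have hFeq : ∀ (i : Fin K) (t : ℝ),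
      (if a = 0 then Λ i / S * (S - E) * t else Λ i / S * ((S - E) / a) * (1 - Real.exp (-(a * t))))
        = Λ i / S * F t := by
    intro i t
    rw [hFdef]
    split_ifs <;> ring
  have hcsum : ∑ j, Λ j / S = 1 := by
    rw [← Finset.sum_div, ← hSdef, div_self hS.ne']
  constructor
  · -- uniqueness
    intro z hzc hznn hzne hz0 hz'
    set y : ℝ → ℝ := fun t => ∑ j, z t j with hydef
    have hyc : ContinuousOn y (Set.Ici 0) := by
      apply continuousOn_finset_sum
      intro j _
      exact (continuous_apply j).comp_continuousOn hzc
    have hy0 : y 0 = 0 := by simp [hydef, hz0]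
    have hypos : ∀ t : ℝ, 0 < t → 0 < y t := by
      intro t ht
      obtain ⟨j, hj⟩ := Function.ne_iff.1 (hzne t ht)
      exact Finset.sum_pos' (fun k _ => hznn t ht.le k)
        ⟨j, Finset.mem_univ j, lt_of_le_of_ne (hznn t ht.le j) (Ne.symm hj)⟩
    have hy' : ∀ t : ℝ, 0 < t → HasDerivAt y (S - a * y t - E) t := by
      intro t ht
      have := HasDerivAt.sum (fun i (_ : i ∈ Finset.univ) => hz' t ht i)
      convert this using 1
      · rfl
      · rfl
      · ext s
        simp [hydef]
      have h1 : ∑ i, (Λ i - a * z t i - E * z t i / y t)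
          = S - a * y t - E * y t / y t := by
        rw [Finset.sum_sub_distrib, Finset.sum_sub_distrib, ← Finset.mul_sum]
        congr 1
        rw [← Finset.sum_div, ← Finset.mul_sum]
      rw [h1, mul_div_assoc, div_self (hypos t ht).ne', mul_one]
    -- step 1 : y = F on [0,∞)
    have hyF : ∀ t : ℝ, 0 ≤ t → y t = F t := by
      have hg' : ∀ t : ℝ, 0 < t →
          HasDerivAt (fun s => Real.exp (a * s) * (y s - F s)) 0 t := by
        intro t ht
        have hexp : HasDerivAt (fun s : ℝ => Real.exp (a * s)) (Real.exp (a * t) * a) t := by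
          simpa using ((hasDerivAt_id t).const_mul a).exp
        have := hexp.mul ((hy' t ht).sub (hF' t))
        convert this using 1
        · rfl
        · rfl
        · rfl
        simp only [Pi.sub_apply]
        ring
      have hgc : ContinuousOn (fun s => Real.exp (a * s) * (y s - F s)) (Set.Ici 0) := by
        exact ((Real.continuous_exp.comp (continuous_const.mul continuous_id)).continuousOn).mul
          (hyc.sub hFc.continuousOn)
      have hconst := const_on_Ici _ hgc hg'
      intro t ht
      have h1 : Real.exp (a * t) * (y t - F t) = 0 := by
        rw [hconst t ht, hy0, hF0]; ring
      have hexpne : Real.exp (a * t) ≠ 0 := (Real.exp_pos _).ne'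
      have h2 : y t - F t = 0 := by
        rcases mul_eq_zero.1 h1 with h | h
        · exact absurd h hexpne
        · exact h
      linarith
    -- step 2 : each component
    intro t ht i
    rw [hFeq i t]
    set κ : ℝ := E / (S - E) with hκdef
    have hκ : 0 < κ := div_pos hE hSE
    have hκE : κ * (S - E) = E := div_mul_cancel₀ E hSE.ne'
    clear_value κ
    set w : ℝ → ℝ := fun s => z s i - Λ i / S * F s with hwdef
    have hw0 : w 0 = 0 := by
      simp [hwdef, hF0, hz0]
    have hwc : ContinuousOn w (Set.Ici 0) := by
      exact ((continuous_apply i).comp_continuousOn hzc).sub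
        ((continuous_const.mul hFc).continuousOn)
    have hw' : ∀ s : ℝ, 0 < s → HasDerivAt w (-(a + E / F s) * w s) s := by
      intro s hs
      have hys : (∑ j, z s j) = F s := hyF s hs.le
      have hder := (hz' s hs i).sub ((hF' s).const_mul (Λ i / S))
      rw [hys] at hder
      convert hder using 1
      · rfl
      · rfl
      · rfl
      have hFne : F s ≠ 0 := (hFpos s hs).ne'
      simp only [hwdef]
      field_simp
      ring
    set μ : ℝ → ℝ := fun s => Real.exp ((1 + κ) * a * s) * (F s) ^ κ with hμdef
    have hμc : Continuous μ := by
      exact (Real.continuous_exp.comp (continuous_const.mul continuous_id)).mul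
        ((Real.continuous_rpow_const hκ.le).comp hFc)
    have hμpos : ∀ s : ℝ, 0 < s → 0 < μ s := by
      intro s hs
      exact mul_pos (Real.exp_pos _) (Real.rpow_pos_of_pos (hFpos s hs) κ)
    have hμ' : ∀ s : ℝ, 0 < s → HasDerivAt μ ((a + E / F s) * μ s) s := by
      intro s hs
      have hFne : F s ≠ 0 := (hFpos s hs).ne'
      have hexp : HasDerivAt (fun u : ℝ => Real.exp ((1 + κ) * a * u))
          (Real.exp ((1 + κ) * a * s) * ((1 + κ) * a)) s := by
        simpa using ((hasDerivAt_id s).const_mul ((1 + κ) * a)).exp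
      have hrpow := (hF' s).rpow_const (p := κ) (Or.inl hFne)
      have := hexp.mul hrpow
      rw [hμdef]
      convert this using 1
      · rfl
      · rfl
      · rfl
      have hpow : F s ^ (κ - 1) = F s ^ κ / F s := by
        rw [Real.rpow_sub (hFpos s hs), Real.rpow_one]
      rw [hpow]
      field_simp
      linear_combination (-(F s ^ κ)) * hκE
    -- h := μ * w is constant 0
    have hh' : ∀ s : ℝ, 0 < s → HasDerivAt (fun u => μ u * w u) 0 s := by
      intro s hs
      have := (hμ' s hs).mul (hw' s hs)
      convert this using 1
      · rfl
      · rfl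
      · rfl
      ring
    have hhc : ContinuousOn (fun u => μ u * w u) (Set.Ici 0) :=
      hμc.continuousOn.mul hwc
    have hconst := const_on_Ici _ hhc hh'
    have hzero : ∀ s : ℝ, 0 ≤ s → μ s * w s = 0 := by
      intro s hs
      rw [hconst s hs, hw0, mul_zero]
    rcases ht.eq_or_lt with h | h
    · rw [← h]
      simp [hz0, hF0]
    · have := hzero t ht
      have hμne : μ t ≠ 0 := (hμpos t h).ne'
      have hwt : w t = 0 := by
        rcases mul_eq_zero.1 this with hh | hh
        · exact absurd hh hμne
        · exact hh
      rw [hwdef] at hwt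
      simp only at hwt
      linarith
  · -- existence
    refine ⟨fun t i => Λ i / S * F t, ?_, ?_, ?_, ?_, ?_, ?_⟩
    · rw [continuousOn_pi]
      intro i
      exact (continuous_const.mul hFc).continuousOn
    · intro t ht i
      exact mul_nonneg (div_nonneg (hΛ i).le hS.le) (hFnonneg t ht)
    · intro t ht hcontra
      obtain ⟨i⟩ := hK
      have := congrFun hcontra i
      simp only [Pi.zero_apply] at this
      have : Λ i / S * F t ≠ 0 :=
        (mul_pos (div_pos (hΛ i) hS) (hFpos t ht)).ne'
      exact this (congrFun hcontra i)
    · funext i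
      simp [hF0]
    · intro t ht i
      have hFne : F t ≠ 0 := (hFpos t ht).ne'
      have hsum : ∑ j, Λ j / S * F t = F t := by
        rw [← Finset.sum_mul, hcsum, one_mul]
      have := (hF' t).const_mul (Λ i / S)
      convert this using 1
      · rfl
      · rfl
      rw [hsum]
      field_simp
      ring
    · intro t ht i
      exact (hFeq i t).symm
end

section
/- Let z(·) be a fluid model solution with initial state z⁰ ∈ ℝ₊^K. Then for each i and t ≥ 0, zᵢ(t) = zᵢ⁰ exp(−pᵢt − ∫₀ᵗ e^{−1}/‖z(s)‖₁ ds) + Λᵢ ∫₀ᵗ exp(−pᵢ(t−s) − ∫ₛᵗ e^{−1}/‖z(x)‖₁ dx) ds. Conversely, any continuous nonnegative function, nonzero for t > 0, satisfying this integral equation is a fluid model solution. -/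
open MeasureTheory intervalIntegral Set Filter Real

namespace FluidModelAux

lemma rearr {a : ℝ → ℝ} {ε t : ℝ} (hεt : ε ≤ t) (hac : ContinuousOn a (Icc ε t)) (c : ℝ) :
    (∫ s in ε..t, Real.exp (-(c * (t - s)) - ∫ x in s..t, a x))
      = Real.exp (-(c * (t - ε)) - ∫ x in ε..t, a x)
        * ∫ s in ε..t, Real.exp (c * (s - ε) + ∫ x in ε..s, a x) := by
  rw [← intervalIntegral.integral_const_mul]
  refine intervalIntegral.integral_congr fun s hs => ?_
  rw [uIcc_of_le hεt] at hs
  have h1 : IntervalIntegrable a volume ε s :=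
    (hac.mono (Icc_subset_Icc le_rfl hs.2)).intervalIntegrable_of_Icc hs.1
  have h2 : IntervalIntegrable a volume s t :=
    (hac.mono (Icc_subset_Icc hs.1 le_rfl)).intervalIntegrable_of_Icc hs.2
  have hadd := intervalIntegral.integral_add_adjacent_intervals h1 h2
  rw [← Real.exp_add]
  congr 1
  linear_combination -hadd

/-- integrable on `Icc 0 t` if continuous and bounded on `Ioc 0 t`. -/
lemma bddIntegrableOn {h : ℝ → ℝ} {t C : ℝ}
    (hc : ContinuousOn h (Ioc 0 t)) (hb : ∀ s ∈ Ioc 0 t, |h s| ≤ C) :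
    IntegrableOn h (Icc 0 t) := by
  rw [integrableOn_Icc_iff_integrableOn_Ioc]
  refine ⟨hc.aestronglyMeasurable measurableSet_Ioc, ?_⟩
  refine HasFiniteIntegral.of_bounded (C := C) ?_
  refine (ae_restrict_iff' measurableSet_Ioc).2 (ae_of_all _ fun s hs => ?_)
  simpa [Real.norm_eq_abs] using hb s hs

lemma core_fwd {a f : ℝ → ℝ} {c L ε t : ℝ}
    (hac : ContinuousOn a (Ici ε))
    (haca : ∀ x ∈ Ioi ε, ContinuousAt a x)
    (hfc : ContinuousOn f (Ici ε))
    (hfca : ∀ x ∈ Ioi ε, ContinuousAt f x)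
    (hA : ∀ u, ε ≤ u → f u = f ε + (u - ε) * L - ∫ s in ε..u, (c + a s) * f s)
    (hεt : ε ≤ t) :
    f t = f ε * Real.exp (-(c * (t - ε)) - ∫ s in ε..t, a s)
      + L * ∫ s in ε..t, Real.exp (-(c * (t - s)) - ∫ x in s..t, a x) := by
  have haIoi : ContinuousOn a (Ioi ε) := fun x hx => (haca x hx).continuousWithinAt
  have hfIoi : ContinuousOn f (Ioi ε) := fun x hx => (hfca x hx).continuousWithinAt
  have haint : ∀ u, ε ≤ u → IntervalIntegrable a volume ε u := fun u hu =>
    (hac.mono Icc_subset_Ici_self).intervalIntegrable_of_Icc hu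
  have hBd : ∀ x ∈ Ioi ε, HasDerivAt (fun u => c * (u - ε) + ∫ s in ε..u, a s) (c + a x) x := by
    intro x hx
    have h1 : HasDerivAt (fun u : ℝ => c * (u - ε)) c x := by
      simpa using (((hasDerivAt_id x).sub_const ε).const_mul c)
    have h2 : HasDerivAt (fun u => ∫ s in ε..u, a s) (a x) x :=
      intervalIntegral.integral_hasDerivAt_right (haint x (le_of_lt hx))
        (haIoi.stronglyMeasurableAtFilter isOpen_Ioi x hx) (haca x hx)
    exact h1.add h2
  have hfd : ∀ x ∈ Ioi ε, HasDerivAt f (L - (c + a x) * f x) x := by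
    intro x hx
    have hcont' : ContinuousOn (fun s => (c + a s) * f s) (Ioi ε) :=
      (continuousOn_const.add haIoi).mul hfIoi
    have hint : IntervalIntegrable (fun s => (c + a s) * f s) volume ε x :=
      (((continuousOn_const.add hac).mul hfc).mono Icc_subset_Ici_self).intervalIntegrable_of_Icc
        (le_of_lt hx)
    have h2 : HasDerivAt (fun u => ∫ s in ε..u, (c + a s) * f s) ((c + a x) * f x) x :=
      intervalIntegral.integral_hasDerivAt_right hint
        (hcont'.stronglyMeasurableAtFilter isOpen_Ioi x hx)
        ((continuousAt_const.add (haca x hx)).mul (hfca x hx))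
    have h1 : HasDerivAt (fun u : ℝ => f ε + (u - ε) * L) L x := by
      simpa using (((hasDerivAt_id x).sub_const ε).mul_const L).const_add (f ε)
    have h3 := h1.sub h2
    refine h3.congr_of_eventuallyEq ?_
    exact Filter.eventuallyEq_of_mem (isOpen_Ioi.mem_nhds hx) fun y hy => hA y (le_of_lt hy)
  have hBc : ContinuousOn (fun u => c * (u - ε) + ∫ s in ε..u, a s) (Icc ε t) := by
    refine ((continuous_const.mul (continuous_id.sub continuous_const)).continuousOn).add ?_
    have := intervalIntegral.continuousOn_primitive_interval
      (f := a) (a := ε) (b := t) (μ := volume) ?_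
    · rwa [uIcc_of_le hεt] at this
    · rw [uIcc_of_le hεt]; exact (hac.mono Icc_subset_Ici_self).integrableOn_Icc
  have hucont : ContinuousOn
      (fun u => f u * Real.exp (c * (u - ε) + ∫ s in ε..u, a s)) (Icc ε t) :=
    (hfc.mono Icc_subset_Ici_self).mul (Real.continuous_exp.comp_continuousOn hBc)
  have hud : ∀ x ∈ Ioo ε t, HasDerivWithinAt
      (fun u => f u * Real.exp (c * (u - ε) + ∫ s in ε..u, a s))
      (L * Real.exp (c * (x - ε) + ∫ s in ε..x, a s)) (Ioi x) x := by
    intro x hx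
    have h := (hfd x hx.1).mul ((hBd x hx.1).exp)
    have heq : (L - (c + a x) * f x) * Real.exp (c * (x - ε) + ∫ s in ε..x, a s)
        + f x * (Real.exp (c * (x - ε) + ∫ s in ε..x, a s) * (c + a x))
        = L * Real.exp (c * (x - ε) + ∫ s in ε..x, a s) := by ring
    rw [heq] at h
    exact h.hasDerivWithinAt
  have hint' : IntervalIntegrable
      (fun x => L * Real.exp (c * (x - ε) + ∫ s in ε..x, a s)) volume ε t :=
    (continuousOn_const.mul
      (Real.continuous_exp.comp_continuousOn hBc)).intervalIntegrable_of_Icc hεt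
  have key := intervalIntegral.integral_eq_sub_of_hasDeriv_right_of_le hεt hucont hud hint'
  rw [intervalIntegral.integral_const_mul] at key
  simp only [intervalIntegral.integral_same, sub_self, mul_zero, add_zero, zero_add,
    Real.exp_zero, mul_one] at key
  rw [rearr hεt (hac.mono Icc_subset_Ici_self) c]
  have hexp : Real.exp (-(c * (t - ε)) - ∫ s in ε..t, a s)
      * Real.exp (c * (t - ε) + ∫ s in ε..t, a s) = 1 := by
    rw [← Real.exp_add]; ring_nf; exact Real.exp_zero
  linear_combination (-Real.exp (-(c * (t - ε)) - ∫ s in ε..t, a s)) * key - f t * hexp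

lemma core_bwd {a f : ℝ → ℝ} {c L ε t : ℝ}
    (hac : ContinuousOn a (Ici ε))
    (haca : ∀ x ∈ Ioi ε, ContinuousAt a x)
    (hB : ∀ u, ε ≤ u → f u = f ε * Real.exp (-(c * (u - ε)) - ∫ s in ε..u, a s)
      + L * ∫ s in ε..u, Real.exp (-(c * (u - s)) - ∫ x in s..u, a x))
    (hεt : ε ≤ t) :
    f t = f ε + (t - ε) * L - ∫ s in ε..t, (c + a s) * f s := by
  have haIoi : ContinuousOn a (Ioi ε) := fun x hx => (haca x hx).continuousWithinAt
  have haint : ∀ u, ε ≤ u → IntervalIntegrable a volume ε u := fun u hu =>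
    (hac.mono Icc_subset_Ici_self).intervalIntegrable_of_Icc hu
  set G : ℝ → ℝ := fun s => Real.exp (c * (s - ε) + ∫ x in ε..s, a x) with hGdef
  set φ : ℝ → ℝ := fun u =>
    Real.exp (-(c * (u - ε)) - ∫ x in ε..u, a x) * (f ε + L * ∫ s in ε..u, G s) with hφdef
  have hprimc : ∀ u, ε ≤ u → ContinuousOn (fun x => ∫ s in ε..x, a s) (Icc ε u) := by
    intro u hu
    have := intervalIntegral.continuousOn_primitive_interval
      (f := a) (a := ε) (b := u) (μ := volume)
      (by rw [uIcc_of_le hu]; exact (hac.mono Icc_subset_Ici_self).integrableOn_Icc)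
    rwa [uIcc_of_le hu] at this
  have hGc : ∀ u, ε ≤ u → ContinuousOn G (Icc ε u) := by
    intro u hu
    exact Real.continuous_exp.comp_continuousOn
      (((continuous_const.mul
        (continuous_id.sub continuous_const)).continuousOn).add (hprimc u hu))
  have hGint : ∀ u, ε ≤ u → IntervalIntegrable G volume ε u := fun u hu =>
    (hGc u hu).intervalIntegrable_of_Icc hu
  have hφ : ∀ u, ε ≤ u → f u = φ u := by
    intro u hu
    rw [hB u hu, rearr hu (hac.mono Icc_subset_Ici_self) c, hφdef]
    ring
  have hprimd : ∀ x ∈ Ioi ε, HasDerivAt (fun u => ∫ s in ε..u, a s) (a x) x := fun x hx =>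
    intervalIntegral.integral_hasDerivAt_right (haint x (le_of_lt hx))
      (haIoi.stronglyMeasurableAtFilter isOpen_Ioi x hx) (haca x hx)
  have hGIoi : ContinuousOn G (Ioi ε) := by
    intro x hx
    exact (Real.continuous_exp.continuousAt.comp
      (((continuousAt_id.sub continuousAt_const).const_mul c).add
        (hprimd x hx).continuousAt)).continuousWithinAt
  have hGd : ∀ x ∈ Ioi ε, HasDerivAt (fun u => ∫ s in ε..u, G s) (G x) x := by
    intro x hx
    refine intervalIntegral.integral_hasDerivAt_right (hGint x (le_of_lt hx))
      (hGIoi.stronglyMeasurableAtFilter isOpen_Ioi x hx)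
      ((hGIoi x hx).continuousAt (isOpen_Ioi.mem_nhds hx))
  have hmul : ∀ x : ℝ, Real.exp (-(c * (x - ε)) - ∫ s in ε..x, a s) * G x = 1 := by
    intro x
    have harg : (-(c * (x - ε)) - ∫ s in ε..x, a s) + (c * (x - ε) + ∫ s in ε..x, a s) = 0 := by
      ring
    rw [hGdef, ← Real.exp_add, harg, Real.exp_zero]
  have hφd : ∀ x ∈ Ioi ε, HasDerivAt φ (L - (c + a x) * φ x) x := by
    intro x hx
    have h2 : HasDerivAt (fun u : ℝ => c * (u - ε)) c x := by
      simpa using (((hasDerivAt_id x).sub_const ε).const_mul c)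
    have h1 : HasDerivAt (fun u : ℝ => -(c * (u - ε)) - ∫ s in ε..u, a s) (-(c + a x)) x := by
      have := (h2.neg).sub (hprimd x hx)
      exact this.congr_deriv (by ring)
    have hEd := h1.exp
    have h := hEd.mul (((hGd x hx).const_mul L).const_add (f ε))
    have harr : Real.exp (-(c * (x - ε)) - ∫ s in ε..x, a s) * -(c + a x)
          * (f ε + L * ∫ s in ε..x, G s)
        + Real.exp (-(c * (x - ε)) - ∫ s in ε..x, a s) * (L * G x)
        = L - (c + a x) * φ x := by
      rw [hφdef]
      linear_combination L * hmul x
    rw [hφdef]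
    exact harr ▸ h
  have hEc : ContinuousOn (fun u => Real.exp (-(c * (u - ε)) - ∫ s in ε..u, a s)) (Icc ε t) :=
    Real.continuous_exp.comp_continuousOn
      (((continuous_const.mul (continuous_id.sub continuous_const)).continuousOn.neg).sub
        (hprimc t hεt))
  have hJc : ContinuousOn (fun u => ∫ s in ε..u, G s) (Icc ε t) := by
    have := intervalIntegral.continuousOn_primitive_interval (f := G) (a := ε) (b := t)
      (μ := volume) (by rw [uIcc_of_le hεt]; exact (hGc t hεt).integrableOn_Icc)
    rwa [uIcc_of_le hεt] at this
  have hφc : ContinuousOn φ (Icc ε t) := by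
    rw [hφdef]
    exact hEc.mul (continuousOn_const.add (continuousOn_const.mul hJc))
  have hφint : IntervalIntegrable (fun x => L - (c + a x) * φ x) volume ε t :=
    (continuousOn_const.sub
      ((continuousOn_const.add (hac.mono Icc_subset_Ici_self)).mul hφc)).intervalIntegrable_of_Icc
      hεt
  have key := intervalIntegral.integral_eq_sub_of_hasDeriv_right_of_le hεt hφc
    (fun x hx => (hφd x hx.1).hasDerivWithinAt) hφint
  have hsub : (∫ y in ε..t, (L - (c + a y) * φ y))
      = (∫ _y in ε..t, L) - ∫ y in ε..t, (c + a y) * φ y :=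
    intervalIntegral.integral_sub _root_.intervalIntegrable_const
      (((continuousOn_const.add (hac.mono Icc_subset_Ici_self)).mul hφc).intervalIntegrable_of_Icc
        hεt)
  rw [hsub, intervalIntegral.integral_const] at key
  have hφε : φ ε = f ε := by rw [hφdef]; simp
  have hcongr : (∫ s in ε..t, (c + a s) * φ s) = ∫ s in ε..t, (c + a s) * f s := by
    refine intervalIntegral.integral_congr fun s hs => ?_
    rw [uIcc_of_le hεt] at hs
    rw [← hφ s hs.1]
  rw [hcongr, hφε, smul_eq_mul] at key
  have hft := hφ t hεt
  linear_combination hft - key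

end FluidModelAux
open MeasureTheory intervalIntegral Set Filter Real Topology FluidModelAux in
/-- Lemma 2 (equivalent description of the fluid model): a continuous
nonnegative function, nonzero for t > 0, satisfies the fluid model integral
equation iff it satisfies the variation-of-constants integral equation. -/
theorem fluid_model_equivalent_description (K : ℕ) (Λ p : Fin K → ℝ)
    (hΛ : ∀ i, 0 < Λ i) (hΛ1 : Real.exp (-1) < ∑ i, Λ i) (hp : ∀ i, 0 < p i)
    (z0 : Fin K → ℝ) (hz0 : ∀ i, 0 ≤ z0 i)
    (z : ℝ → Fin K → ℝ)
    (hzc : ContinuousOn z (Set.Ici 0))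
    (hznn : ∀ t : ℝ, 0 ≤ t → ∀ i, 0 ≤ z t i)
    (hzne : ∀ t : ℝ, 0 < t → z t ≠ 0)
    (hinit : z 0 = z0) :
    (∀ t : ℝ, 0 ≤ t → ∀ i,
      z t i = z0 i + t * Λ i
        - Real.exp (-1) * (∫ s in (0:ℝ)..t,
            if z s = 0 then Λ i / ∑ j, Λ j else z s i / ∑ j, z s j)
        - p i * ∫ s in (0:ℝ)..t, z s i) ↔
    (∀ t : ℝ, 0 ≤ t → ∀ i,
      z t i = z0 i * Real.exp (-(p i * t)
          - ∫ s in (0:ℝ)..t, Real.exp (-1) / ∑ j, z s j)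
        + Λ i * ∫ s in (0:ℝ)..t, Real.exp (-(p i * (t - s))
            - ∫ x in s..t, Real.exp (-1) / ∑ j, z x j)) := by
  -- ## Common preliminaries
  have hzci : ∀ i, ContinuousOn (fun s => z s i) (Ici 0) := fun i =>
    (continuous_apply i).comp_continuousOn hzc
  have hSc : ContinuousOn (fun s => ∑ j, z s j) (Ici 0) :=
    continuousOn_finset_sum Finset.univ fun j _ => hzci j
  have hSpos : ∀ s : ℝ, 0 < s → 0 < ∑ j, z s j := by
    intro s hs
    obtain ⟨j, hj⟩ := Function.ne_iff.mp (hzne s hs)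
    refine Finset.sum_pos' (fun k _ => hznn s hs.le k) ⟨j, Finset.mem_univ j, ?_⟩
    exact lt_of_le_of_ne (hznn s hs.le j) (by simpa [eq_comm] using hj)
  have hzneS : ∀ s : ℝ, 0 < ∑ j, z s j → z s ≠ 0 := by
    intro s hS h
    rw [h] at hS
    simp at hS
  have hfca : ∀ i, ∀ x : ℝ, 0 < x → ContinuousAt (fun s => z s i) x := fun i x hx =>
    (hzci i).continuousAt (Ici_mem_nhds hx)
  have hSca : ∀ x : ℝ, 0 < x → ContinuousAt (fun s => ∑ j, z s j) x := fun x hx =>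
    hSc.continuousAt (Ici_mem_nhds hx)
  have haca : ∀ x : ℝ, 0 < x → ContinuousAt (fun s => Real.exp (-1) / ∑ j, z s j) x :=
    fun x hx => continuousAt_const.div (hSca x hx) (ne_of_gt (hSpos x hx))
  have haIoi : ContinuousOn (fun s => Real.exp (-1) / ∑ j, z s j) (Ioi 0) :=
    fun x hx => (haca x hx).continuousWithinAt
  have hanonneg : ∀ s : ℝ, 0 < s → 0 ≤ Real.exp (-1) / ∑ j, z s j := fun s hs =>
    div_nonneg (Real.exp_nonneg _) (hSpos s hs).le
  have hfle : ∀ i, ∀ s : ℝ, 0 < s → z s i / ∑ j, z s j ≤ 1 := fun i s hs =>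
    (div_le_one (hSpos s hs)).2
      (Finset.single_le_sum (fun k _ => hznn s hs.le k) (Finset.mem_univ i))
  have hacOn : ∀ ε : ℝ, 0 ≤ ε → (∀ s, ε ≤ s → 0 < ∑ j, z s j) →
      ContinuousOn (fun s => Real.exp (-1) / ∑ j, z s j) (Ici ε) := fun ε hε hpos =>
    continuousOn_const.div (hSc.mono (Ici_subset_Ici.2 hε)) fun s hs => ne_of_gt (hpos s hs)
  have haii : ∀ v w : ℝ, 0 < v → v ≤ w →
      IntervalIntegrable (fun s => Real.exp (-1) / ∑ j, z s j) volume v w := by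
    intro v w hv hvw
    refine ((hacOn v hv.le fun s hs => hSpos s (lt_of_lt_of_le hv hs)).mono
      Icc_subset_Ici_self).intervalIntegrable_of_Icc hvw
  have hintnn : ∀ v w : ℝ, 0 < v → v ≤ w →
      0 ≤ ∫ x in v..w, Real.exp (-1) / ∑ j, z x j := by
    intro v w hv hvw
    exact intervalIntegral.integral_nonneg hvw fun u hu => hanonneg u (lt_of_lt_of_le hv hu.1)
  -- expressions of the form exp(-(c(t-s)) - ∫ a) are ≤ 1
  have hexple : ∀ i, ∀ v w : ℝ, 0 < v → v ≤ w →
      Real.exp (-(p i * (w - v)) - ∫ x in v..w, Real.exp (-1) / ∑ j, z x j) ≤ 1 := by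
    intro i v w hv hvw
    rw [Real.exp_le_one_iff]
    have h1 := hintnn v w hv hvw
    have h2 : 0 ≤ p i * (w - v) := mul_nonneg (hp i).le (sub_nonneg.2 hvw)
    linarith
  -- interval integrability of the components
  have hfii : ∀ i, ∀ v w : ℝ, 0 ≤ v → v ≤ w →
      IntervalIntegrable (fun s => z s i) volume v w := by
    intro i v w hv hvw
    exact ((hzci i).mono fun x (hx : x ∈ Icc v w) =>
      le_trans hv hx.1).intervalIntegrable_of_Icc hvw
  -- integrability of the market-share integrand
  have hmint : ∀ i, ∀ u : ℝ, 0 ≤ u → IntegrableOn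
      (fun s => if z s = 0 then Λ i / ∑ j, Λ j else z s i / ∑ j, z s j) (Icc 0 u) := by
    intro i u _
    refine bddIntegrableOn (C := 1) ?_ ?_
    · refine ContinuousOn.congr (f := fun s => z s i / ∑ j, z s j) ?_ ?_
      · exact fun x hx =>
          ((hfca i x hx.1).div (hSca x hx.1) (ne_of_gt (hSpos x hx.1))).continuousWithinAt
      · intro s hs
        simp only [if_neg (hzne s hs.1)]
    · intro s hs
      rw [if_neg (hzne s hs.1),
        abs_of_nonneg (div_nonneg (hznn s hs.1.le i) (hSpos s hs.1).le)]
      exact hfle i s hs.1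
  have hmii : ∀ i, ∀ v w : ℝ, 0 ≤ v → v ≤ w → IntervalIntegrable
      (fun s => if z s = 0 then Λ i / ∑ j, Λ j else z s i / ∑ j, z s j) volume v w := by
    intro i v w hv hvw
    rw [intervalIntegrable_iff_integrableOn_Icc_of_le hvw]
    exact (hmint i w (hv.trans hvw)).mono_set (Icc_subset_Icc hv le_rfl)
  -- integrability of the exponential kernel
  have hgint : ∀ i, ∀ u : ℝ, 0 ≤ u → IntegrableOn
      (fun s => Real.exp (-(p i * (u - s)) - ∫ x in s..u, Real.exp (-1) / ∑ j, z x j))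
      (Icc 0 u) := by
    intro i u _
    refine bddIntegrableOn (C := 1) ?_ ?_
    · intro x hx
      have hdl := intervalIntegral.integral_hasDerivAt_left (haii x u hx.1 hx.2)
        (haIoi.stronglyMeasurableAtFilter isOpen_Ioi x hx.1) (haca x hx.1)
      exact (Real.continuous_exp.continuousAt.comp
        ((((continuousAt_const.sub continuousAt_id).const_mul (p i)).neg).sub
          hdl.continuousAt)).continuousWithinAt
    · intro s hs
      rw [abs_of_nonneg (Real.exp_nonneg _)]
      exact hexple i s u hs.1 hs.2
  have hgii : ∀ i, ∀ u : ℝ, 0 ≤ u → ∀ v w : ℝ, 0 ≤ v → v ≤ w → w ≤ u → IntervalIntegrable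
      (fun s => Real.exp (-(p i * (u - s)) - ∫ x in s..u, Real.exp (-1) / ∑ j, z x j))
      volume v w := by
    intro i u hu v w hv hvw hwu
    rw [intervalIntegrable_iff_integrableOn_Icc_of_le hvw]
    exact (hgint i u hu).mono_set (Icc_subset_Icc hv hwu)
  -- integrability of (p i + a s) * z s i on [0, u]
  have hhint : ∀ i, ∀ u : ℝ, 0 ≤ u → IntegrableOn
      (fun s => (p i + Real.exp (-1) / ∑ j, z s j) * z s i) (Icc 0 u) := by
    intro i u hu
    obtain ⟨M, hM⟩ := (isCompact_Icc : IsCompact (Icc (0:ℝ) u)).exists_bound_of_continuousOn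
      ((hzci i).mono fun x (hx : x ∈ Icc 0 u) => hx.1)
    refine bddIntegrableOn (C := p i * M + Real.exp (-1)) ?_ ?_
    · exact fun x hx =>
        ((continuousAt_const.add (haca x hx.1)).mul (hfca i x hx.1)).continuousWithinAt
    · intro s hs
      have h1 : 0 ≤ z s i := hznn s hs.1.le i
      have h2 : 0 ≤ Real.exp (-1) / ∑ j, z s j := hanonneg s hs.1
      rw [abs_of_nonneg (mul_nonneg (add_nonneg (hp i).le h2) h1)]
      have h3 : (Real.exp (-1) / ∑ j, z s j) * z s i ≤ Real.exp (-1) := by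
        rw [div_mul_eq_mul_div, mul_div_assoc]
        exact mul_le_of_le_one_right (Real.exp_nonneg _) (hfle i s hs.1)
      have h4 : z s i ≤ M := by
        have := hM s ⟨hs.1.le, hs.2⟩
        rw [Real.norm_eq_abs] at this
        exact le_trans (le_abs_self _) this
      have h5 : p i * z s i ≤ p i * M := mul_le_mul_of_nonneg_left h4 (hp i).le
      nlinarith
  have hhii : ∀ i, ∀ v w : ℝ, 0 ≤ v → v ≤ w → IntervalIntegrable
      (fun s => (p i + Real.exp (-1) / ∑ j, z s j) * z s i) volume v w := by
    intro i v w hv hvw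
    rw [intervalIntegrable_iff_integrableOn_Icc_of_le hvw]
    exact (hhint i w (hv.trans hvw)).mono_set (Icc_subset_Icc hv le_rfl)
  -- conversion of the combined integrand back to statement form
  have hconv : ∀ i, ∀ t : ℝ, 0 ≤ t →
      (∫ s in (0:ℝ)..t, (p i + Real.exp (-1) / ∑ j, z s j) * z s i)
        = Real.exp (-1) * (∫ s in (0:ℝ)..t,
            if z s = 0 then Λ i / ∑ j, Λ j else z s i / ∑ j, z s j)
          + p i * ∫ s in (0:ℝ)..t, z s i := by
    intro i t ht
    have hcg : (∫ s in (0:ℝ)..t, (p i + Real.exp (-1) / ∑ j, z s j) * z s i)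
        = ∫ s in (0:ℝ)..t,
          (Real.exp (-1) * (if z s = 0 then Λ i / ∑ j, Λ j else z s i / ∑ j, z s j)
            + p i * z s i) := by
      refine intervalIntegral.integral_congr_ae (ae_of_all _ fun s hs => ?_)
      rw [uIoc_of_le ht] at hs
      rw [if_neg (hzne s hs.1)]
      ring
    rw [hcg, intervalIntegral.integral_add ((hmii i 0 t le_rfl ht).const_mul _)
      ((hfii i 0 t le_rfl ht).const_mul _),
      intervalIntegral.integral_const_mul, intervalIntegral.integral_const_mul]
  -- ## the equivalence
  constructor
  · -- forward direction
    intro hyp t ht i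
    -- the core-form equation based at any ε
    have hsub : ∀ ε : ℝ, 0 ≤ ε → (∀ s, ε ≤ s → 0 < ∑ j, z s j) → ∀ u, ε ≤ u →
        z u i = z ε i + (u - ε) * Λ i
          - ∫ s in ε..u, (p i + Real.exp (-1) / ∑ j, z s j) * z s i := by
      intro ε hε hpos u hu
      have h1 := hyp u (hε.trans hu) i
      have h2 := hyp ε hε i
      have hMdiff := intervalIntegral.integral_interval_sub_left
        (hmii i 0 u le_rfl (hε.trans hu)) (hmii i 0 ε le_rfl hε)
      have hFdiff := intervalIntegral.integral_interval_sub_left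
        (hfii i 0 u le_rfl (hε.trans hu)) (hfii i 0 ε le_rfl hε)
      have hsplit : (∫ s in ε..u, (p i + Real.exp (-1) / ∑ j, z s j) * z s i)
          = Real.exp (-1) * (∫ s in ε..u,
              if z s = 0 then Λ i / ∑ j, Λ j else z s i / ∑ j, z s j)
            + p i * ∫ s in ε..u, z s i := by
        have hcg : (∫ s in ε..u, (p i + Real.exp (-1) / ∑ j, z s j) * z s i)
            = ∫ s in ε..u,
              (Real.exp (-1) * (if z s = 0 then Λ i / ∑ j, Λ j else z s i / ∑ j, z s j)
                + p i * z s i) := by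
          refine intervalIntegral.integral_congr fun s hs => ?_
          rw [uIcc_of_le hu] at hs
          rw [if_neg (hzneS s (hpos s hs.1))]
          ring
        rw [hcg, intervalIntegral.integral_add ((hmii i ε u hε hu).const_mul _)
          ((hfii i ε u hε hu).const_mul _),
          intervalIntegral.integral_const_mul, intervalIntegral.integral_const_mul]
      linear_combination h1 - h2 + hsplit - Real.exp (-1) * hMdiff - p i * hFdiff
    by_cases hz00 : z 0 = 0
    · -- zero initial state
      rcases ht.eq_or_lt with h0 | htpos
      · rw [← h0]
        simp [← hinit]
      · have hz0i : z0 i = 0 := by rw [← hinit, hz00]; simp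
        have hfwd : ∀ᶠ ε in 𝓝[>] (0:ℝ), z t i
            = z ε i * Real.exp (-(p i * (t - ε))
                - ∫ s in ε..t, Real.exp (-1) / ∑ j, z s j)
              + Λ i * ∫ s in ε..t, Real.exp (-(p i * (t - s))
                  - ∫ x in s..t, Real.exp (-1) / ∑ j, z x j) := by
          filter_upwards [Ioo_mem_nhdsGT htpos] with ε hε
          have hpos : ∀ s, ε ≤ s → 0 < ∑ j, z s j := fun s hs =>
            hSpos s (lt_of_lt_of_le hε.1 hs)
          exact core_fwd (hacOn ε hε.1.le hpos) (fun x hx => haca x (hε.1.trans hx))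
            ((hzci i).mono (Ici_subset_Ici.2 hε.1.le))
            (fun x hx => hfca i x (hε.1.trans hx))
            (hsub ε hε.1.le hpos) hε.2.le
        have hlim1 : Tendsto (fun ε => z ε i) (𝓝[>] 0) (𝓝 0) := by
          have h := (hzci i) 0 self_mem_Ici
          rw [ContinuousWithinAt, hz00] at h
          simp only [Pi.zero_apply] at h
          exact h.mono_left (nhdsWithin_mono 0 Ioi_subset_Ici_self)
        have hlim2 : Tendsto (fun ε => ∫ s in ε..t, Real.exp (-(p i * (t - s))
              - ∫ x in s..t, Real.exp (-1) / ∑ j, z x j)) (𝓝[>] 0)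
            (𝓝 (∫ s in (0:ℝ)..t, Real.exp (-(p i * (t - s))
              - ∫ x in s..t, Real.exp (-1) / ∑ j, z x j))) := by
          have hcont := intervalIntegral.continuousOn_primitive_interval_left
            (f := fun s => Real.exp (-(p i * (t - s))
              - ∫ x in s..t, Real.exp (-1) / ∑ j, z x j)) (a := 0) (b := t) (μ := volume)
            (by rw [uIcc_of_le ht]; exact hgint i t ht)
          have h0 : (0:ℝ) ∈ uIcc (0:ℝ) t := left_mem_uIcc
          refine (hcont 0 h0).mono_left (nhdsWithin_le_of_mem ?_)
          rw [uIcc_of_le ht]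
          exact Filter.mem_of_superset (Ioo_mem_nhdsGT htpos) Ioo_subset_Icc_self
        have hlim3 : Tendsto (fun ε => z ε i * Real.exp (-(p i * (t - ε))
            - ∫ s in ε..t, Real.exp (-1) / ∑ j, z s j)) (𝓝[>] 0) (𝓝 0) := by
          refine squeeze_zero' ?_ ?_ hlim1
          · filter_upwards [Ioo_mem_nhdsGT htpos] with ε hε
            exact mul_nonneg (hznn ε hε.1.le i) (Real.exp_nonneg _)
          · filter_upwards [Ioo_mem_nhdsGT htpos] with ε hε
            exact mul_le_of_le_one_right (hznn ε hε.1.le i) (hexple i ε t hε.1 hε.2.le)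
        have hfinal := hlim3.add (hlim2.const_mul (Λ i))
        have hconst := tendsto_const_nhds (α := ℝ) (f := 𝓝[>] (0:ℝ)) (x := z t i)
        have huniq := tendsto_nhds_unique (hconst.congr' hfwd) hfinal
        rw [hz0i]
        simpa using huniq
    · -- nonzero initial state
      have hS0 : 0 < ∑ j, z 0 j := by
        obtain ⟨j, hj⟩ := Function.ne_iff.mp hz00
        refine Finset.sum_pos' (fun k _ => hznn 0 le_rfl k) ⟨j, Finset.mem_univ j, ?_⟩
        exact lt_of_le_of_ne (hznn 0 le_rfl j) (by simpa [eq_comm] using hj)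
      have hpos : ∀ s : ℝ, 0 ≤ s → 0 < ∑ j, z s j := by
        intro s hs
        rcases hs.eq_or_lt with h | h
        · rw [← h]; exact hS0
        · exact hSpos s h
      have h := core_fwd (ε := 0) (hacOn 0 le_rfl hpos) (fun x hx => haca x hx)
        (hzci i) (fun x hx => hfca i x hx) (hsub 0 le_rfl hpos) ht
      rw [sub_zero, hinit] at h
      exact h
  · -- backward direction
    intro hyp t ht i
    by_cases hz00 : z 0 = 0
    · rcases ht.eq_or_lt with h0 | htpos
      · rw [← h0]
        simp [← hinit]
      · have hz0i : z0 i = 0 := by rw [← hinit, hz00]; simp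
        have hBu : ∀ u : ℝ, 0 ≤ u → z u i = Λ i * ∫ s in (0:ℝ)..u,
            Real.exp (-(p i * (u - s)) - ∫ x in s..u, Real.exp (-1) / ∑ j, z x j) := by
          intro u hu
          have h := hyp u hu i
          rw [hz0i, zero_mul, zero_add] at h
          exact h
        have hBε : ∀ ε : ℝ, 0 < ε → ∀ u, ε ≤ u → z u i
            = z ε i * Real.exp (-(p i * (u - ε))
                - ∫ s in ε..u, Real.exp (-1) / ∑ j, z s j)
              + Λ i * ∫ s in ε..u, Real.exp (-(p i * (u - s))
                  - ∫ x in s..u, Real.exp (-1) / ∑ j, z x j) := by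
          intro ε hε u hu
          have hupos : (0:ℝ) < u := lt_of_lt_of_le hε hu
          have hzε := hBu ε hε.le
          have hsplit := (intervalIntegral.integral_add_adjacent_intervals
            (hgii i u hupos.le 0 ε le_rfl hε.le hu)
            (hgii i u hupos.le ε u hε.le hu le_rfl)).symm
          have hEmul : Real.exp (-(p i * (u - ε)) - ∫ s in ε..u, Real.exp (-1) / ∑ j, z s j)
                * (∫ s in (0:ℝ)..ε, Real.exp (-(p i * (ε - s))
                    - ∫ x in s..ε, Real.exp (-1) / ∑ j, z x j))
              = ∫ s in (0:ℝ)..ε, Real.exp (-(p i * (u - s))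
                  - ∫ x in s..u, Real.exp (-1) / ∑ j, z x j) := by
            rw [← intervalIntegral.integral_const_mul]
            refine intervalIntegral.integral_congr_ae (ae_of_all _ fun s hs => ?_)
            rw [uIoc_of_le hε.le] at hs
            have hadd := intervalIntegral.integral_add_adjacent_intervals
              (haii s ε hs.1 hs.2) (haii ε u hε hu)
            rw [← Real.exp_add]
            congr 1
            linear_combination -hadd
          linear_combination hBu u hupos.le + Λ i * hsplit - Λ i * hEmul
            - Real.exp (-(p i * (u - ε)) - ∫ s in ε..u, Real.exp (-1) / ∑ j, z s j) * hzε
        have hAε : ∀ ε : ℝ, ε ∈ Ioo 0 t → z t i = z ε i + (t - ε) * Λ i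
            - ∫ s in ε..t, (p i + Real.exp (-1) / ∑ j, z s j) * z s i := by
          intro ε hε
          have hpos : ∀ s, ε ≤ s → 0 < ∑ j, z s j := fun s hs =>
            hSpos s (lt_of_lt_of_le hε.1 hs)
          exact core_bwd (hacOn ε hε.1.le hpos) (fun x hx => haca x (hε.1.trans hx))
            (hBε ε hε.1) hε.2.le
        have hlim1 : Tendsto (fun ε => z ε i) (𝓝[>] 0) (𝓝 0) := by
          have h := (hzci i) 0 self_mem_Ici
          rw [ContinuousWithinAt, hz00] at h
          simp only [Pi.zero_apply] at h
          exact h.mono_left (nhdsWithin_mono 0 Ioi_subset_Ici_self)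
        have hlim2 : Tendsto (fun ε : ℝ => (t - ε) * Λ i) (𝓝[>] 0) (𝓝 (t * Λ i)) := by
          have : Tendsto (fun ε : ℝ => (t - ε) * Λ i) (𝓝 0) (𝓝 ((t - 0) * Λ i)) :=
            ((continuous_const.sub continuous_id).mul continuous_const).tendsto 0
          rw [sub_zero] at this
          exact this.mono_left nhdsWithin_le_nhds
        have hlim3 : Tendsto (fun ε => ∫ s in ε..t,
              (p i + Real.exp (-1) / ∑ j, z s j) * z s i) (𝓝[>] 0)
            (𝓝 (∫ s in (0:ℝ)..t, (p i + Real.exp (-1) / ∑ j, z s j) * z s i)) := by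
          have hcont := intervalIntegral.continuousOn_primitive_interval_left
            (f := fun s => (p i + Real.exp (-1) / ∑ j, z s j) * z s i) (a := 0) (b := t)
            (μ := volume) (by rw [uIcc_of_le ht]; exact hhint i t ht)
          have h0 : (0:ℝ) ∈ uIcc (0:ℝ) t := left_mem_uIcc
          refine (hcont 0 h0).mono_left (nhdsWithin_le_of_mem ?_)
          rw [uIcc_of_le ht]
          exact Filter.mem_of_superset (Ioo_mem_nhdsGT htpos) Ioo_subset_Icc_self
        have hfinal := (hlim1.add hlim2).sub hlim3
        have hconst := tendsto_const_nhds (α := ℝ) (f := 𝓝[>] (0:ℝ)) (x := z t i)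
        have hfwd : ∀ᶠ ε in 𝓝[>] (0:ℝ), z t i = z ε i + (t - ε) * Λ i
            - ∫ s in ε..t, (p i + Real.exp (-1) / ∑ j, z s j) * z s i := by
          filter_upwards [Ioo_mem_nhdsGT htpos] with ε hε
          exact hAε ε hε
        have huniq := tendsto_nhds_unique (hconst.congr' hfwd) hfinal
        rw [zero_add] at huniq
        have hc := hconv i t ht
        rw [hz0i]
        linear_combination huniq - hc
    · -- nonzero initial state
      have hS0 : 0 < ∑ j, z 0 j := by
        obtain ⟨j, hj⟩ := Function.ne_iff.mp hz00
        refine Finset.sum_pos' (fun k _ => hznn 0 le_rfl k) ⟨j, Finset.mem_univ j, ?_⟩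
        exact lt_of_le_of_ne (hznn 0 le_rfl j) (by simpa [eq_comm] using hj)
      have hpos : ∀ s : ℝ, 0 ≤ s → 0 < ∑ j, z s j := by
        intro s hs
        rcases hs.eq_or_lt with h | h
        · rw [← h]; exact hS0
        · exact hSpos s h
      have hB' : ∀ u : ℝ, 0 ≤ u → z u i
          = z 0 i * Real.exp (-(p i * (u - 0))
              - ∫ s in (0:ℝ)..u, Real.exp (-1) / ∑ j, z s j)
            + Λ i * ∫ s in (0:ℝ)..u, Real.exp (-(p i * (u - s))
                - ∫ x in s..u, Real.exp (-1) / ∑ j, z x j) := by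
        intro u hu
        rw [sub_zero, hinit]
        exact hyp u hu i
      have h := core_bwd (ε := 0) (hacOn 0 le_rfl hpos) (fun x hx => haca x hx) hB' ht
      rw [sub_zero, hinit] at h
      have hc := hconv i t ht
      linear_combination h - hc
end
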